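/- The function i(t,t') determined by a finite multiset B of intervals with endpoints among the critical values determines the multiset B itself: if two such multisets B and B' satisfy i_B(t,t') = i_{B'}(t,t') for all t ≤ t', then B = B'. -/

import Mathlib

open Classical Multiset

noncomputable section

/-- The four kinds of intervals: closed-closed, closed-open, open-closed, open-open. -/
inductive BarKind : Type
  | cc | co | oc | oo
  deriving DecidableEq

/-- A real interval of one of the four types, with endpoints `a ≤ b`. -/
structure Bar : Type where
  kind : BarKind
  a : ℝ
  b : ℝ

instance : DecidableEq Bar := Classical.decEq _

namespace Bar

/-- The underlying set of points of the interval. -/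
def toSet (I : Bar) : Set ℝ :=
  match I.kind with
  | .cc => Set.Icc I.a I.b
  | .co => Set.Ico I.a I.b
  | .oc => Set.Ioc I.a I.b
  | .oo => Set.Ioo I.a I.b

/-- Nonemptiness condition: `a ≤ b` for closed intervals, `a < b` otherwise. -/
def Valid (I : Bar) : Prop :=
  match I.kind with
  | .cc => I.a ≤ I.b
  | _ => I.a < I.b

def rightOpen (I : Bar) : Prop := I.kind = .co ∨ I.kind = .oo
def leftOpen (I : Bar) : Prop := I.kind = .oc ∨ I.kind = .oo
def leftClosed (I : Bar) : Prop := I.kind = .cc ∨ I.kind = .co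

end Bar

/-- `i(t,t')`: the number of intervals of `B` containing `[t,t']`. -/
def icount (B : Multiset Bar) (t t' : ℝ) : ℕ :=
  countP (fun I => Set.Icc t t' ⊆ I.toSet) B

/-- `l(t)`: the number of intervals of `B` containing `t`. -/
def lcount (B : Multiset Bar) (t : ℝ) : ℕ :=
  countP (fun I => t ∈ I.toSet) B

/-- `l⁺(t;t')`: intervals of `B` containing `t` with open right endpoint `≤ t'`. -/
def lplus (B : Multiset Bar) (t t' : ℝ) : ℕ :=
  countP (fun I => t ∈ I.toSet ∧ I.rightOpen ∧ I.b ≤ t') B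

/-- `l⁻(t;t'')`: intervals of `B` containing `t` with open left endpoint `≥ t''`. -/
def lminus (B : Multiset Bar) (t t'' : ℝ) : ℕ :=
  countP (fun I => t ∈ I.toSet ∧ I.leftOpen ∧ t'' ≤ I.a) B

/-- `e(t;t',t'')`: open intervals `(a,b)` of `B` with `t'' ≤ a < t < b ≤ t'`. -/
def ecount (B : Multiset Bar) (t t' t'' : ℝ) : ℕ :=
  countP (fun I => I.kind = .oo ∧ t'' ≤ I.a ∧ I.a < t ∧ t < I.b ∧ I.b ≤ t') B

/-- All endpoints of intervals of `B` lie among the critical values `t 0, …, t N`. -/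
def endpointsIn (B : Multiset Bar) (t : ℕ → ℝ) (N : ℕ) : Prop :=
  ∀ I ∈ B, (∃ i ≤ N, I.a = t i) ∧ (∃ j ≤ N, I.b = t j)

namespace Stmt5Aux

/-- Encoded left value: open left endpoints are shifted right by `ε`. -/
def lval (ε : ℝ) (I : Bar) : ℝ :=
  match I.kind with
  | .cc | .co => I.a
  | .oc | .oo => I.a + ε

/-- Encoded right value: open right endpoints are shifted left by `ε`. -/
def rval (ε : ℝ) (I : Bar) : ℝ :=
  match I.kind with
  | .cc | .oc => I.b
  | .co | .oo => I.b - ε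

def gridX (t : ℕ → ℝ) (N : ℕ) (ε v : ℝ) : Prop :=
  (∃ k ≤ N, v = t k) ∨ (∃ k ≤ N, v = t k + ε)

def gridY (t : ℕ → ℝ) (N : ℕ) (ε v : ℝ) : Prop :=
  (∃ k ≤ N, v = t k) ∨ (∃ k ≤ N, v = t k - ε)

def goodX (t : ℕ → ℝ) (N : ℕ) (ε x : ℝ) : Prop := gridX t N ε x ∨ x = t 0 - 1

def goodY (t : ℕ → ℝ) (N : ℕ) (ε y : ℝ) : Prop := gridY t N ε y ∨ y = t N + 1

variable {N : ℕ} {t : ℕ → ℝ} {ε : ℝ}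

lemma gap_lt (ht : StrictMono t) (hgap : ∀ i ≤ N, t i + 3*ε ≤ t (i+1))
    {i k : ℕ} (hik : i < k) (hiN : i ≤ N) : t i + 3*ε ≤ t k :=
  le_trans (hgap i hiN) (ht.monotone hik)

lemma lkey (ht : StrictMono t) (hε : 0 < ε) (hgap : ∀ i ≤ N, t i + 3*ε ≤ t (i+1))
    {i : ℕ} (hiN : i ≤ N) {x : ℝ} (hx : goodX t N ε x) :
    t i < x ↔ t i + ε ≤ x := by
  constructor
  · intro hlt
    rcases hx with (⟨k, hk, rfl⟩ | ⟨k, hk, rfl⟩) | rfl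
    · have hik : i < k := ht.lt_iff_lt.mp hlt
      have := gap_lt ht hgap hik hiN
      linarith
    · by_cases hik : i ≤ k
      · have := ht.monotone hik; linarith
      · push_neg at hik
        have := gap_lt ht hgap hik hk
        linarith
    · have := ht.monotone (Nat.zero_le i)
      linarith
  · intro hle; linarith

lemma rkey (ht : StrictMono t) (hε : 0 < ε) (hgap : ∀ i ≤ N, t i + 3*ε ≤ t (i+1))
    {j : ℕ} (hjN : j ≤ N) {y : ℝ} (hy : goodY t N ε y) :
    y < t j ↔ y ≤ t j - ε := by
  constructor
  · intro hlt
    rcases hy with (⟨k, hk, rfl⟩ | ⟨k, hk, rfl⟩) | rfl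
    · have hkj : k < j := ht.lt_iff_lt.mp hlt
      have := gap_lt ht hgap hkj hk
      linarith
    · by_cases hkj : k ≤ j
      · have := ht.monotone hkj; linarith
      · push_neg at hkj
        have := gap_lt ht hgap hkj hjN
        linarith
    · have := ht.monotone hjN
      linarith
  · intro hle; linarith

lemma subset_iff (ht : StrictMono t) (hε : 0 < ε) (hgap : ∀ i ≤ N, t i + 3*ε ≤ t (i+1))
    {x y : ℝ} (hxy : x ≤ y) (hx : goodX t N ε x) (hy : goodY t N ε y) (I : Bar)
    (hIa : ∃ i ≤ N, I.a = t i) (hIb : ∃ j ≤ N, I.b = t j) :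
    Set.Icc x y ⊆ I.toSet ↔ (lval ε I ≤ x ∧ y ≤ rval ε I) := by
  obtain ⟨i, hi, ha⟩ := hIa
  obtain ⟨j, hj, hb⟩ := hIb
  have hL : I.a < x ↔ I.a + ε ≤ x := by rw [ha]; exact lkey ht hε hgap hi hx
  have hR : y < I.b ↔ y ≤ I.b - ε := by rw [hb]; exact rkey ht hε hgap hj hy
  cases hk : I.kind
  · simp only [Bar.toSet, lval, rval, hk]
    rw [Set.Icc_subset_Icc_iff hxy]
  · simp only [Bar.toSet, lval, rval, hk]
    rw [Set.Icc_subset_Ico_iff hxy, hR]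
  · simp only [Bar.toSet, lval, rval, hk]
    rw [Set.Icc_subset_Ioc_iff hxy, hL]
  · simp only [Bar.toSet, lval, rval, hk]
    rw [Set.Icc_subset_Ioo_iff hxy, hL, hR]

lemma icount_eq (ht : StrictMono t) (hε : 0 < ε) (hgap : ∀ i ≤ N, t i + 3*ε ≤ t (i+1))
    (M : Multiset Bar) (hM : endpointsIn M t N)
    {x y : ℝ} (hxy : x ≤ y) (hx : goodX t N ε x) (hy : goodY t N ε y) :
    icount M x y = countP (fun I => lval ε I ≤ x ∧ y ≤ rval ε I) M := by
  unfold icount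
  refine countP_congr rfl (fun I hI => ?_)
  exact propext (subset_iff ht hε hgap hxy hx hy I (hM I hI).1 (hM I hI).2)

lemma lval_grid (I : Bar) (hIa : ∃ i ≤ N, I.a = t i) : gridX t N ε (lval ε I) := by
  obtain ⟨i, hi, ha⟩ := hIa
  cases hk : I.kind <;> simp only [lval, hk] <;>
    first
      | exact Or.inl ⟨i, hi, ha⟩
      | exact Or.inr ⟨i, hi, by rw [ha]⟩

lemma rval_grid (I : Bar) (hIb : ∃ j ≤ N, I.b = t j) : gridY t N ε (rval ε I) := by
  obtain ⟨j, hj, hb⟩ := hIb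
  cases hk : I.kind <;> simp only [rval, hk] <;>
    first
      | exact Or.inl ⟨j, hj, hb⟩
      | exact Or.inr ⟨j, hj, by rw [hb]⟩

lemma exists_pl (ht : StrictMono t) (hε : 0 < ε) (hgap : ∀ i ≤ N, t i + 3*ε ≤ t (i+1))
    (J : Bar) (hJa : ∃ i ≤ N, J.a = t i) :
    ∃ pl, goodX t N ε pl ∧ pl < lval ε J ∧
      ∀ v, gridX t N ε v → (v ≤ pl ↔ v < lval ε J) := by
  obtain ⟨i, hi, ha⟩ := hJa
  have hcases : lval ε J = J.a ∨ lval ε J = J.a + ε := by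
    cases hk : J.kind <;> simp [lval, hk]
  rcases hcases with hlv | hlv <;> rw [ha] at hlv
  · rcases Nat.eq_zero_or_pos i with rfl | hpos
    · refine ⟨t 0 - 1, Or.inr rfl, by rw [hlv]; linarith, ?_⟩
      intro v hv
      rw [hlv]
      constructor
      · intro h1; linarith
      · intro h1
        exfalso
        rcases hv with ⟨k, hk, rfl⟩ | ⟨k, hk, rfl⟩ <;>
          · have := ht.monotone (Nat.zero_le k); linarith
    · have hi1 : i - 1 ≤ N := le_trans (Nat.sub_le i 1) hi
      have hlt : i - 1 < i := Nat.sub_lt hpos one_pos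
      have hg := gap_lt ht hgap hlt hi1
      refine ⟨t (i-1) + ε, Or.inl (Or.inr ⟨i-1, hi1, rfl⟩), by rw [hlv]; linarith, ?_⟩
      intro v hv
      rw [hlv]
      constructor
      · intro h1; linarith
      · rcases hv with ⟨k, hk, rfl⟩ | ⟨k, hk, rfl⟩
        · intro h1
          have hki : k ≤ i - 1 := Nat.le_sub_one_of_lt (ht.lt_iff_lt.mp h1)
          have := ht.monotone hki
          linarith
        · intro h1
          have hki : k ≤ i - 1 := Nat.le_sub_one_of_lt (ht.lt_iff_lt.mp (by linarith))
          have := ht.monotone hki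
          linarith
  · refine ⟨t i, Or.inl (Or.inl ⟨i, hi, rfl⟩), by rw [hlv]; linarith, ?_⟩
    intro v hv
    rw [hlv]
    constructor
    · intro h1; linarith
    · rcases hv with ⟨k, hk, rfl⟩ | ⟨k, hk, rfl⟩
      · intro h1
        by_cases hki : k ≤ i
        · exact ht.monotone hki
        · push_neg at hki
          have := gap_lt ht hgap hki hi
          linarith
      · intro h1
        have hki : k < i := ht.lt_iff_lt.mp (by linarith)
        have := gap_lt ht hgap hki hk
        linarith

lemma exists_sr (ht : StrictMono t) (hε : 0 < ε) (hgap : ∀ i ≤ N, t i + 3*ε ≤ t (i+1))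
    (J : Bar) (hJb : ∃ j ≤ N, J.b = t j) :
    ∃ sr, goodY t N ε sr ∧ rval ε J < sr ∧
      ∀ v, gridY t N ε v → (sr ≤ v ↔ rval ε J < v) := by
  obtain ⟨j, hj, hb⟩ := hJb
  have hcases : rval ε J = J.b ∨ rval ε J = J.b - ε := by
    cases hk : J.kind <;> simp [rval, hk]
  rcases hcases with hrv | hrv <;> rw [hb] at hrv
  · rcases Nat.lt_or_ge j N with hjN | hjN
    · have hg := hgap j hj
      refine ⟨t (j+1) - ε, Or.inl (Or.inr ⟨j+1, hjN, rfl⟩), by rw [hrv]; linarith, ?_⟩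
      intro v hv
      rw [hrv]
      constructor
      · intro h1; linarith
      · rcases hv with ⟨k, hk, rfl⟩ | ⟨k, hk, rfl⟩
        · intro h1
          have hjk : j + 1 ≤ k := Nat.succ_le_of_lt (ht.lt_iff_lt.mp h1)
          have := ht.monotone hjk
          linarith
        · intro h1
          have hjk : j + 1 ≤ k := Nat.succ_le_of_lt (ht.lt_iff_lt.mp (by linarith))
          have := ht.monotone hjk
          linarith
    · have hjN' : j = N := le_antisymm hj hjN
      subst hjN'
      refine ⟨t j + 1, Or.inr rfl, by rw [hrv]; linarith, ?_⟩
      intro v hv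
      rw [hrv]
      constructor
      · intro h1; linarith
      · intro h1
        exfalso
        rcases hv with ⟨k, hk, rfl⟩ | ⟨k, hk, rfl⟩ <;>
          · have := ht.monotone hk; linarith
  · refine ⟨t j, Or.inl (Or.inl ⟨j, hj, rfl⟩), by rw [hrv]; linarith, ?_⟩
    intro v hv
    rw [hrv]
    constructor
    · intro h1; linarith
    · rcases hv with ⟨k, hk, rfl⟩ | ⟨k, hk, rfl⟩
      · intro h1
        by_cases hkj : j ≤ k
        · exact ht.monotone hkj
        · push_neg at hkj
          have := gap_lt ht hgap hkj hk
          linarith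
      · intro h1
        have hjk : j < k := ht.lt_iff_lt.mp (by linarith)
        have := gap_lt ht hgap hjk hj
        linarith

lemma ne_shift (ht : StrictMono t) (hε : 0 < ε) (hgap : ∀ i ≤ N, t i + 3*ε ≤ t (i+1))
    {i k : ℕ} (hiN : i ≤ N) (hkN : k ≤ N) : t i ≠ t k + ε := by
  by_cases hik : i ≤ k
  · have := ht.monotone hik; intro hcon; linarith
  · push_neg at hik
    have := gap_lt ht hgap hik hkN
    intro hcon; linarith

lemma bar_ext {I J : Bar} (h1 : I.kind = J.kind) (h2 : I.a = J.a) (h3 : I.b = J.b) :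
    I = J := by
  cases I; cases J; simp_all

lemma encode_inj (ht : StrictMono t) (hε : 0 < ε) (hgap : ∀ i ≤ N, t i + 3*ε ≤ t (i+1))
    (I J : Bar)
    (hIa : ∃ i ≤ N, I.a = t i) (hIb : ∃ j ≤ N, I.b = t j)
    (hJa : ∃ i ≤ N, J.a = t i) (hJb : ∃ j ≤ N, J.b = t j)
    (hL : lval ε I = lval ε J) (hR : rval ε I = rval ε J) : I = J := by
  obtain ⟨i, hi, ha⟩ := hIa
  obtain ⟨i', hi', ha'⟩ := hJa
  obtain ⟨j, hj, hb⟩ := hIb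
  obtain ⟨j', hj', hb'⟩ := hJb
  have hane : ¬ (I.a = J.a + ε) := by rw [ha, ha']; exact ne_shift ht hε hgap hi hi'
  have hane' : ¬ (J.a = I.a + ε) := by rw [ha, ha']; exact ne_shift ht hε hgap hi' hi
  have hbne : ¬ (I.b = J.b - ε) := by
    rw [hb, hb']; intro hcon
    exact ne_shift ht hε hgap hj' hj (by linarith)
  have hbne' : ¬ (J.b = I.b - ε) := by
    rw [hb, hb']; intro hcon
    exact ne_shift ht hε hgap hj hj' (by linarith)
  cases hkI : I.kind <;> cases hkJ : J.kind <;>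
    simp only [lval, rval, hkI, hkJ] at hL hR <;>
    first
      | exact absurd hL hane
      | exact absurd hL.symm hane'
      | exact absurd hR hbne
      | exact absurd hR.symm hbne'
      | exact bar_ext (hkI.trans hkJ.symm) (by linarith) (by linarith)

lemma lval_le_rval (ht : StrictMono t) (hε : 0 < ε) (hgap : ∀ i ≤ N, t i + 3*ε ≤ t (i+1))
    (J : Bar) (hJv : J.Valid) (hJa : ∃ i ≤ N, J.a = t i) (hJb : ∃ j ≤ N, J.b = t j) :
    lval ε J ≤ rval ε J := by
  obtain ⟨i, hi, ha⟩ := hJa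
  obtain ⟨j, hj, hb⟩ := hJb
  have key : J.a < J.b → J.a + 3*ε ≤ J.b := by
    intro hab
    rw [ha, hb] at hab ⊢
    exact gap_lt ht hgap (ht.lt_iff_lt.mp hab) hi
  unfold Bar.Valid at hJv
  cases hk : J.kind <;> rw [hk] at hJv <;> simp only [lval, rval, hk]
  · exact hJv
  · have := key hJv; linarith
  · have := key hJv; linarith
  · have := key hJv; linarith

lemma countP_combine (p q r1 r2 : Bar → Prop) [DecidablePred p] [DecidablePred q]
    [DecidablePred r1] [DecidablePred r2] (J : Bar) (M : Multiset Bar)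
    (hpt : ∀ I ∈ M,
      ((if p I then 1 else 0) + (if q I then 1 else 0) : ℕ) =
      (if J = I then 1 else 0) + (if r1 I then 1 else 0) + (if r2 I then 1 else 0)) :
    countP p M + countP q M = count J M + countP r1 M + countP r2 M := by
  induction M using Multiset.induction_on with
  | empty => simp
  | cons a s ih =>
    have ha := hpt a (mem_cons_self a s)
    have ih' := ih (fun I hI => hpt I (mem_cons_of_mem hI))
    simp only [countP_cons, count_cons]
    omega

lemma pointwise (l r pl sr : ℝ) (I J : Bar)
    (hA' : lval ε I ≤ pl ↔ lval ε I < l)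
    (hB' : sr ≤ rval ε I ↔ r < rval ε I)
    (hEq : lval ε I = l → rval ε I = r → J = I)
    (hJl : lval ε J = l) (hJr : rval ε J = r) :
    ((if lval ε I ≤ l ∧ r ≤ rval ε I then 1 else 0) +
      (if lval ε I ≤ pl ∧ sr ≤ rval ε I then 1 else 0) : ℕ) =
    (if J = I then 1 else 0) + (if lval ε I ≤ pl ∧ r ≤ rval ε I then 1 else 0) +
      (if lval ε I ≤ l ∧ sr ≤ rval ε I then 1 else 0) := by
  rcases lt_trichotomy (lval ε I) l with hc | hc | hc
  · have h3 : J ≠ I := by rintro rfl; exact hc.ne hJl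
    simp only [hc.le, hA'.mpr hc, true_and, if_neg h3]
    omega
  · have h2 : ¬ lval ε I ≤ pl := fun hle => (hA'.mp hle).ne hc
    rcases lt_trichotomy (rval ε I) r with hd | hd | hd
    · have hB2 : ¬ sr ≤ rval ε I := fun hh => absurd (hB'.mp hh) (not_lt.mpr hd.le)
      have h3 : J ≠ I := by rintro rfl; exact hd.ne hJr
      simp [le_of_eq hc, h2, not_le.mpr hd, hB2, h3]
    · have h3 : J = I := hEq hc hd
      have hB2 : ¬ sr ≤ rval ε I := fun hh => (hB'.mp hh).ne' hd
      simp [le_of_eq hc, h2, hd.ge, hB2, h3]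
    · have h3 : J ≠ I := by rintro rfl; exact hd.ne' hJr
      simp [le_of_eq hc, h2, hd.le, hB'.mpr hd, h3]
  · have hA : ¬ lval ε I ≤ l := not_le.mpr hc
    have h2 : ¬ lval ε I ≤ pl := fun hle => absurd (hA'.mp hle) (asymm hc)
    have h3 : J ≠ I := by rintro rfl; exact hc.ne' hJl
    simp [hA, h2, h3]

lemma count_eq (ht : StrictMono t) (hε : 0 < ε) (hgap : ∀ i ≤ N, t i + 3*ε ≤ t (i+1))
    (B B' : Multiset Bar)
    (hBv : ∀ I ∈ B, I.Valid) (hB'v : ∀ I ∈ B', I.Valid)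
    (hB : endpointsIn B t N) (hB' : endpointsIn B' t N)
    (h : ∀ s s' : ℝ, s ≤ s' → icount B s s' = icount B' s s')
    (J : Bar) (hJv : J.Valid) (hJa : ∃ i ≤ N, J.a = t i) (hJb : ∃ j ≤ N, J.b = t j) :
    count J B = count J B' := by
  obtain ⟨pl, hplg, hpl, hplc⟩ := exists_pl ht hε hgap J hJa
  obtain ⟨sr, hsrg, hsr, hsrc⟩ := exists_sr ht hε hgap J hJb
  have hlr : lval ε J ≤ rval ε J := lval_le_rval ht hε hgap J hJv hJa hJb
  have hlg : goodX t N ε (lval ε J) := Or.inl (lval_grid J hJa)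
  have hrg : goodY t N ε (rval ε J) := Or.inl (rval_grid J hJb)
  have hplr : pl ≤ rval ε J := le_trans hpl.le hlr
  have hlsr : lval ε J ≤ sr := le_trans hlr hsr.le
  have hplsr : pl ≤ sr := le_trans hplr hsr.le
  have key : ∀ M : Multiset Bar, (∀ I ∈ M, I.Valid) → endpointsIn M t N →
      icount M (lval ε J) (rval ε J) + icount M pl sr =
        count J M + icount M pl (rval ε J) + icount M (lval ε J) sr := by
    intro M hMv hMc
    rw [icount_eq ht hε hgap M hMc hlr hlg hrg,
        icount_eq ht hε hgap M hMc hplsr hplg hsrg,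
        icount_eq ht hε hgap M hMc hplr hplg hrg,
        icount_eq ht hε hgap M hMc hlsr hlg hsrg]
    refine countP_combine _ _ _ _ J M (fun I hI => ?_)
    exact pointwise (lval ε J) (rval ε J) pl sr I J
      (hplc (lval ε I) (lval_grid I (hMc I hI).1))
      (hsrc (rval ε I) (rval_grid I (hMc I hI).2))
      (fun h1 h2 => (encode_inj ht hε hgap I J (hMc I hI).1 (hMc I hI).2 hJa hJb h1 h2).symm)
      rfl rfl
  have e1 := key B hBv hB
  have e2 := key B' hB'v hB'
  have h1 := h (lval ε J) (rval ε J) hlr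
  have h2 := h pl sr hplsr
  have h3 := h pl (rval ε J) hplr
  have h4 := h (lval ε J) sr hlsr
  omega

end Stmt5Aux

open Stmt5Aux in
theorem stmt5 (N : ℕ) (t : ℕ → ℝ) (ht : StrictMono t)
    (B B' : Multiset Bar)
    (hBv : ∀ I ∈ B, I.Valid) (hB'v : ∀ I ∈ B', I.Valid)
    (hB : endpointsIn B t N) (hB' : endpointsIn B' t N)
    (h : ∀ s s' : ℝ, s ≤ s' → icount B s s' = icount B' s s') :
    B = B' := by
  classical
  have hne : (Finset.range (N+1)).Nonempty := ⟨0, by simp⟩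
  set gap := (Finset.range (N+1)).inf' hne (fun i => t (i+1) - t i) with hgapdef
  set ε := gap / 3 with hεdef
  have hgap0 : 0 < gap := by
    rw [hgapdef, Finset.lt_inf'_iff]
    intro i _
    have := ht (Nat.lt_succ_self i)
    linarith
  have hε : 0 < ε := by rw [hεdef]; linarith
  have hgap3 : ∀ i ≤ N, t i + 3*ε ≤ t (i+1) := by
    intro i hi
    have hmem : i ∈ Finset.range (N+1) := by simp [Nat.lt_succ_iff, hi]
    have hle : gap ≤ t (i+1) - t i := by
      rw [hgapdef]; exact Finset.inf'_le _ hmem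
    have h3 : 3 * ε = gap := by rw [hεdef]; ring
    linarith
  refine Multiset.ext.mpr (fun J => ?_)
  by_cases hJ : J ∈ B ∨ J ∈ B'
  · rcases hJ with hJ | hJ
    · exact count_eq ht hε hgap3 B B' hBv hB'v hB hB' h J (hBv J hJ) (hB J hJ).1 (hB J hJ).2
    · exact count_eq ht hε hgap3 B B' hBv hB'v hB hB' h J (hB'v J hJ) (hB' J hJ).1 (hB' J hJ).2
  · push_neg at hJ
    rw [count_eq_zero_of_notMem hJ.1, count_eq_zero_of_notMem hJ.2]
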